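/- K_a(ℓᵖ) = 2^{1/p} for 1 < p < ∞, and K_a(c₀) = K_a(ℓ¹) = 2. -/

import Mathlib

open Set Filter

noncomputable section

/-- `S` is a `(c₁, c₂, d)`-bounded and separated antipodal subset of `X`. -/
def IsBSA (X : Type*) [NormedAddCommGroup X] [NormedSpace ℝ X] (S : Set X)
    (c₁ c₂ d : ℝ) : Prop :=
  (∀ x ∈ S, ‖x‖ ≤ c₁) ∧
  ∀ x ∈ S, ∀ y ∈ S, x ≠ y → ∃ f : X →L[ℝ] ℝ, ‖f‖ ≤ c₂ ∧ d ≤ f y - f x ∧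
    ∀ z ∈ S, f x ≤ f z ∧ f z ≤ f y

/-- The antipodal Kottman constant `K_a(X)`. -/
def Ka (X : Type*) [NormedAddCommGroup X] [NormedSpace ℝ X] : ℝ :=
  sSup {d : ℝ | ∃ S : Set X, S.Infinite ∧ IsBSA X S 1 1 d}

/-- The Kottman (separation) constant `K(X)`. -/
def Kc (X : Type*) [NormedAddCommGroup X] : ℝ :=
  sSup {d : ℝ | ∃ S : Set X, S ⊆ Metric.closedBall 0 1 ∧ S.Infinite ∧
    ∀ x ∈ S, ∀ y ∈ S, x ≠ y → d ≤ ‖x - y‖}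
open scoped ENNReal

open Topology

namespace Stmt16Aux

variable {X : Type*} [NormedAddCommGroup X] [NormedSpace ℝ X]

lemma bsa_sep {S : Set X} {d : ℝ} (h : IsBSA X S 1 1 d) {x y : X}
    (hx : x ∈ S) (hy : y ∈ S) (hxy : x ≠ y) : d ≤ ‖x - y‖ := by
  obtain ⟨f, hf, hd, -⟩ := h.2 x hx y hy hxy
  calc d ≤ f y - f x := hd
    _ = f (y - x) := by rw [map_sub]
    _ ≤ ‖f (y - x)‖ := le_abs_self _
    _ ≤ ‖f‖ * ‖y - x‖ := f.le_opNorm _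
    _ ≤ 1 * ‖y - x‖ := mul_le_mul_of_nonneg_right hf (norm_nonneg _)
    _ = ‖x - y‖ := by rw [one_mul, norm_sub_rev]

lemma bsa_le_two {S : Set X} {d : ℝ} (hS : S.Infinite) (h : IsBSA X S 1 1 d) : d ≤ 2 := by
  obtain ⟨x, hx, y, hy, hxy⟩ := hS.nontrivial
  calc d ≤ ‖x - y‖ := bsa_sep h hx hy hxy
    _ ≤ ‖x‖ + ‖y‖ := norm_sub_le _ _
    _ ≤ 1 + 1 := add_le_add (h.1 x hx) (h.1 y hy)
    _ = 2 := by norm_num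

lemma Ka_eq {c : ℝ} (hex : ∃ S : Set X, S.Infinite ∧ IsBSA X S 1 1 c)
    (hub : ∀ d : ℝ, ∀ S : Set X, S.Infinite → IsBSA X S 1 1 d → d ≤ c) : Ka X = c := by
  apply le_antisymm
  · exact csSup_le ⟨c, hex⟩ (fun d ⟨S, h1, h2⟩ => hub d S h1 h2)
  · exact le_csSup ⟨c, fun d ⟨S, h1, h2⟩ => hub d S h1 h2⟩ hex

open scoped ENNReal

variable {p : ℝ≥0∞} [Fact (1 ≤ p)]

private lemma ite_norm_rpow (hq : 0 < p.toReal) (P : ℕ → Prop) [DecidablePred P]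
    (g : ℕ → ℝ) (k : ℕ) :
    ‖(if P k then g k else 0 : ℝ)‖ ^ p.toReal = (if P k then ‖g k‖ ^ p.toReal else 0) := by
  by_cases h : P k <;> simp [h, Real.zero_rpow hq.ne']

def cut (hq : 0 < p.toReal) (P : ℕ → Prop) [DecidablePred P] (g : ℕ → ℝ)
    (hs : Summable fun k => if P k then ‖g k‖ ^ p.toReal else 0) : lp (fun _ : ℕ => ℝ) p :=
  ⟨fun k => if P k then g k else 0,
    memℓp_gen (hs.congr fun k => (ite_norm_rpow hq P g k).symm)⟩

lemma cut_apply (hq : 0 < p.toReal) (P : ℕ → Prop) [DecidablePred P] (g : ℕ → ℝ)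
    (hs : Summable fun k => if P k then ‖g k‖ ^ p.toReal else 0) (k : ℕ) :
    (cut hq P g hs : ∀ _ : ℕ, ℝ) k = if P k then g k else 0 := rfl

lemma cut_norm (hq : 0 < p.toReal) (P : ℕ → Prop) [DecidablePred P] (g : ℕ → ℝ)
    (hs : Summable fun k => if P k then ‖g k‖ ^ p.toReal else 0) :
    ‖cut hq P g hs‖ ^ p.toReal = ∑' k, if P k then ‖g k‖ ^ p.toReal else 0 := by
  rw [lp.norm_rpow_eq_tsum hq]
  exact tsum_congr fun k => ite_norm_rpow hq P g k

lemma cut_norm_lt (hq : 0 < p.toReal) (g : ℕ → ℝ) (N : ℕ) (hs) :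
    ‖cut hq (fun k => k < N) g hs‖ ^ p.toReal = ∑ k ∈ Finset.range N, ‖g k‖ ^ p.toReal := by
  rw [cut_norm, tsum_eq_sum (s := Finset.range N) (fun k hk => if_neg (by simpa using hk))]
  exact Finset.sum_congr rfl fun k hk => if_pos (Finset.mem_range.mp hk)

lemma cut_norm_win (hq : 0 < p.toReal) (g : ℕ → ℝ) (N M : ℕ) (hs) :
    ‖cut hq (fun k => N ≤ k ∧ k < M) g hs‖ ^ p.toReal
      = ∑ k ∈ Finset.Ico N M, ‖g k‖ ^ p.toReal := by
  rw [cut_norm, tsum_eq_sum (s := Finset.Ico N M)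
    (fun k hk => if_neg (by simpa [Finset.mem_Ico] using hk))]
  exact Finset.sum_congr rfl fun k hk => if_pos (Finset.mem_Ico.mp hk)

lemma le_rpow_inv {q a b : ℝ} (hq : 0 < q) (ha : 0 ≤ a) (h : a ^ q ≤ b) : a ≤ b ^ (1/q) := by
  rw [one_div]
  calc a = (a ^ q) ^ q⁻¹ := (Real.rpow_rpow_inv ha hq.ne').symm
    _ ≤ b ^ q⁻¹ := Real.rpow_le_rpow (Real.rpow_nonneg ha q) h (inv_nonneg.mpr hq.le)

lemma sep_le (hq : 0 < p.toReal) {d : ℝ} (y : ℕ → lp (fun _ : ℕ => ℝ) p)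
    (hb : ∀ n, ‖y n‖ ≤ 1)
    (hd : ∀ n m : ℕ, n ≠ m → d ≤ ‖y n - y m‖) :
    d ≤ 2 ^ (1 / p.toReal) := by
  have hp0 : p ≠ 0 := by intro h; rw [h] at hq; simp at hq
  set q := p.toReal with hqdef
  have hsum : ∀ f : lp (fun _ : ℕ => ℝ) p, Summable fun k => ‖(f : ∀ _ : ℕ, ℝ) k‖ ^ q :=
    fun f => (lp.hasSum_norm hq f).summable
  have hnorm1 : ∀ n, ‖y n‖ ^ q ≤ 1 :=
    fun n => Real.rpow_le_one (norm_nonneg _) (hb n) hq.le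
  -- ultrafilter and coordinate limits
  haveI : NeBot (cofinite : Filter ℕ) := Nat.cofinite_eq_atTop ▸ atTop_neBot
  set U : Ultrafilter ℕ := Ultrafilter.of cofinite with hU
  have hUcof : ↑U ≤ (cofinite : Filter ℕ) := Ultrafilter.of_le _
  have hcoord : ∀ k : ℕ, ∃ l, Tendsto (fun n => (y n : ∀ _ : ℕ, ℝ) k) U (𝓝 l) := by
    intro k
    have h1 : ∀ n, (y n : ∀ _ : ℕ, ℝ) k ∈ Icc (-1:ℝ) 1 := by
      intro n
      have h2 := (lp.norm_apply_le_norm hp0 (y n) k).trans (hb n)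
      rw [Real.norm_eq_abs] at h2
      exact mem_Icc.mpr (abs_le.mp h2)
    obtain ⟨l, _, hle⟩ := isCompact_Icc.ultrafilter_le_nhds
      (U.map fun n => (y n : ∀ _ : ℕ, ℝ) k)
      (by
        rw [Ultrafilter.coe_map, le_principal_iff, mem_map]
        exact univ_mem' h1)
    refine ⟨l, ?_⟩
    rwa [Tendsto, ← Ultrafilter.coe_map]
  choose L hL2 using hcoord
  -- convergence of finite sums of coordinates
  have hsumT : ∀ N : ℕ, Tendsto (fun n => ∑ k ∈ Finset.range N,
      ‖(y n : ∀ _ : ℕ, ℝ) k - L k‖ ^ q) U (𝓝 0) := by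
    intro N
    have hc : ∀ c : ℝ, Continuous fun x : ℝ => ‖x - c‖ ^ q := fun c =>
      ((continuous_id.sub continuous_const).norm).rpow_const (fun _ => Or.inr hq.le)
    have ht : ∀ k, Tendsto (fun n => ‖(y n : ∀ _ : ℕ, ℝ) k - L k‖ ^ q) U
        (𝓝 (‖L k - L k‖ ^ q)) := fun k => (((hc (L k)).tendsto (L k))).comp (hL2 k)
    have := tendsto_finset_sum (Finset.range N) (fun k _ => ht k)
    simpa [Real.zero_rpow hq.ne'] using this
  -- partial sums of L bounded by 1
  set Φ : ℕ → ℝ := fun N => ∑ k ∈ Finset.range N, ‖L k‖ ^ q with hΦdef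
  have hΦle : ∀ N : ℕ, Φ N ≤ 1 := by
    intro N
    have hT : Tendsto (fun n => ∑ k ∈ Finset.range N, ‖(y n : ∀ _ : ℕ, ℝ) k‖ ^ q) U
        (𝓝 (Φ N)) := by
      refine tendsto_finset_sum _ (fun k _ => ?_)
      exact (((continuous_norm).rpow_const (fun _ => Or.inr hq.le)).tendsto (L k)).comp (hL2 k)
    refine le_of_tendsto hT (Eventually.of_forall fun n => ?_)
    calc ∑ k ∈ Finset.range N, ‖(y n : ∀ _ : ℕ, ℝ) k‖ ^ q
        ≤ ∑' k, ‖(y n : ∀ _ : ℕ, ℝ) k‖ ^ q :=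
          (hsum (y n)).sum_le_tsum _ (fun k _ => Real.rpow_nonneg (norm_nonneg _) q)
      _ = ‖y n‖ ^ q := (lp.norm_rpow_eq_tsum hq (y n)).symm
      _ ≤ 1 := hnorm1 n
  have hbdd : BddAbove (Set.range Φ) := ⟨1, by rintro _ ⟨N, rfl⟩; exact hΦle N⟩
  set s : ℝ := sSup (Set.range Φ) with hs
  -- main epsilon estimate
  have main : ∀ ε : ℝ, 0 < ε → d ≤ 2 ^ (1/q) + 5 * ε ^ (1/q) := by
    intro ε hε
    obtain ⟨_, ⟨N, rfl⟩, hN⟩ := exists_lt_of_lt_csSup ⟨Φ 0, mem_range_self 0⟩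
      (sub_lt_self s hε)
    have hwin : ∀ M, Φ M - Φ N ≤ ε := by
      intro M
      have h1 : Φ M ≤ s := le_csSup hbdd (mem_range_self M)
      linarith
    -- pick n
    have hT1 : {n : ℕ | ∑ k ∈ Finset.range N, ‖(y n : ∀ _ : ℕ, ℝ) k - L k‖ ^ q < ε}
        ∈ (U : Filter ℕ) := mem_map.mp ((hsumT N) (Iio_mem_nhds hε))
    obtain ⟨n, hn⟩ := Ultrafilter.nonempty_of_mem hT1
    -- pick M
    obtain ⟨M, hMN, hM2⟩ : ∃ M, N ≤ M ∧
        ‖y n‖ ^ q - ∑ k ∈ Finset.range M, ‖(y n : ∀ _ : ℕ, ℝ) k‖ ^ q ≤ ε := by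
      have ht := (lp.hasSum_norm hq (y n)).tendsto_sum_nat
      have h2 : ∀ᶠ M in atTop, ‖y n‖ ^ q - ε < ∑ k ∈ Finset.range M,
          ‖(y n : ∀ _ : ℕ, ℝ) k‖ ^ q :=
        ht (Ioi_mem_nhds (by linarith [hε] : ‖y n‖ ^ q - ε < ‖y n‖ ^ q))
      obtain ⟨M, hM1, hM2⟩ := ((eventually_ge_atTop N).and h2).exists
      exact ⟨M, hM1, by linarith⟩
    -- pick m
    have hT2 : {m : ℕ | ∑ k ∈ Finset.range M, ‖(y m : ∀ _ : ℕ, ℝ) k - L k‖ ^ q < ε}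
        ∈ (U : Filter ℕ) := mem_map.mp ((hsumT M) (Iio_mem_nhds hε))
    have hT3 : {m : ℕ | m ≠ n} ∈ (U : Filter ℕ) := by
      refine hUcof ?_
      simp only [mem_cofinite]
      convert Set.finite_singleton n
      ext x; simp
    obtain ⟨m, hm2, hmn⟩ := Ultrafilter.nonempty_of_mem (inter_mem hT2 hT3)
    -- summability side conditions
    have hsA1 : Summable fun k => if k < N then ‖(y n : ∀ _ : ℕ, ℝ) k - L k‖ ^ q else 0 :=
      summable_of_ne_finset_zero (s := Finset.range N)
        (fun k hk => if_neg (by simpa using hk))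
    have hsA2 : Summable fun k => if k < N then ‖(y m : ∀ _ : ℕ, ℝ) k - L k‖ ^ q else 0 :=
      summable_of_ne_finset_zero (s := Finset.range N)
        (fun k hk => if_neg (by simpa using hk))
    have hsB1 : Summable fun k => if N ≤ k ∧ k < M then
        ‖(y m : ∀ _ : ℕ, ℝ) k - L k‖ ^ q else 0 :=
      summable_of_ne_finset_zero (s := Finset.Ico N M)
        (fun k hk => if_neg (by simpa [Finset.mem_Ico] using hk))
    have hsB2 : Summable fun k => if N ≤ k ∧ k < M then ‖L k‖ ^ q else 0 :=
      summable_of_ne_finset_zero (s := Finset.Ico N M)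
        (fun k hk => if_neg (by simpa [Finset.mem_Ico] using hk))
    have hsu : Summable fun k => if N ≤ k ∧ k < M then ‖(y n : ∀ _ : ℕ, ℝ) k‖ ^ q else 0 :=
      summable_of_ne_finset_zero (s := Finset.Ico N M)
        (fun k hk => if_neg (by simpa [Finset.mem_Ico] using hk))
    have hsw : Summable fun k => if M ≤ k then ‖(y m : ∀ _ : ℕ, ℝ) k‖ ^ q else 0 := by
      refine Summable.of_nonneg_of_le (fun k => ?_) (fun k => ?_) (hsum (y m))
      · split <;> positivity
      · split
        · exact le_rfl
        · positivity
    have hsr3 : Summable fun k => if M ≤ k then ‖(y n : ∀ _ : ℕ, ℝ) k‖ ^ q else 0 := by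
      refine Summable.of_nonneg_of_le (fun k => ?_) (fun k => ?_) (hsum (y n))
      · split <;> positivity
      · split
        · exact le_rfl
        · positivity
    -- the pieces
    set A1 := cut hq (fun k => k < N) (fun k => (y n : ∀ _ : ℕ, ℝ) k - L k) hsA1 with hA1def
    set A2 := cut hq (fun k => k < N) (fun k => (y m : ∀ _ : ℕ, ℝ) k - L k) hsA2 with hA2def
    set B1 := cut hq (fun k => N ≤ k ∧ k < M) (fun k => (y m : ∀ _ : ℕ, ℝ) k - L k) hsB1
      with hB1def
    set B2 := cut hq (fun k => N ≤ k ∧ k < M) L hsB2 with hB2def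
    set u := cut hq (fun k => N ≤ k ∧ k < M) (fun k => (y n : ∀ _ : ℕ, ℝ) k) hsu with hudef
    set w := cut hq (fun k => M ≤ k) (fun k => (y m : ∀ _ : ℕ, ℝ) k) hsw with hwdef
    set r3 := cut hq (fun k => M ≤ k) (fun k => (y n : ∀ _ : ℕ, ℝ) k) hsr3 with hr3def
    -- decomposition
    have hkey : y n - y m = (((((u - w) + A1) - A2) - B1) - B2) + r3 := by
      apply lp.ext
      funext k
      simp only [lp.coeFn_sub, lp.coeFn_add, Pi.sub_apply, Pi.add_apply,
        hA1def, hA2def, hB1def, hB2def, hudef, hwdef, hr3def, cut_apply]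
      by_cases h1 : k < N
      · have h2 : ¬ (N ≤ k ∧ k < M) := by omega
        have h3 : ¬ (M ≤ k) := by omega
        simp only [if_pos h1, if_neg h2, if_neg h3]
        ring
      · by_cases h4 : k < M
        · have h2 : N ≤ k ∧ k < M := by omega
          have h3 : ¬ (M ≤ k) := by omega
          simp only [if_neg h1, if_pos h2, if_neg h3]
          ring
        · have h2 : ¬ (N ≤ k ∧ k < M) := by omega
          have h3 : M ≤ k := by omega
          simp only [if_neg h1, if_neg h2, if_pos h3]
          ring
    -- norm bounds for pieces
    have hq1 : (0:ℝ) ≤ 1/q := by positivity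
    have hA1n : ‖A1‖ ≤ ε ^ (1/q) :=
      le_rpow_inv hq (norm_nonneg _) (by rw [hA1def, cut_norm_lt]; exact hn.le)
    have hmN : ∑ k ∈ Finset.range N, ‖(y m : ∀ _ : ℕ, ℝ) k - L k‖ ^ q
        ≤ ∑ k ∈ Finset.range M, ‖(y m : ∀ _ : ℕ, ℝ) k - L k‖ ^ q :=
      Finset.sum_le_sum_of_subset_of_nonneg
        (Finset.range_subset_range.mpr hMN) (fun k _ _ => Real.rpow_nonneg (norm_nonneg _) q)
    have hA2n : ‖A2‖ ≤ ε ^ (1/q) :=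
      le_rpow_inv hq (norm_nonneg _)
        (by rw [hA2def, cut_norm_lt]; exact hmN.trans hm2.le)
    have hB1n : ‖B1‖ ≤ ε ^ (1/q) := by
      refine le_rpow_inv hq (norm_nonneg _) ?_
      rw [hB1def, cut_norm_win]
      refine le_trans ?_ hm2.le
      refine Finset.sum_le_sum_of_subset_of_nonneg ?_
        (fun k _ _ => Real.rpow_nonneg (norm_nonneg _) q)
      intro k hk
      simp only [Finset.mem_Ico] at hk
      simp only [Finset.mem_range]
      omega
    have hB2n : ‖B2‖ ≤ ε ^ (1/q) := by
      refine le_rpow_inv hq (norm_nonneg _) ?_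
      rw [hB2def, cut_norm_win]
      have := Finset.sum_Ico_eq_sub (fun k => ‖L k‖ ^ q) hMN
      rw [this]
      exact hwin M
    have hr3n : ‖r3‖ ≤ ε ^ (1/q) := by
      refine le_rpow_inv hq (norm_nonneg _) ?_
      rw [hr3def, cut_norm]
      have hs1 : Summable fun k => if k < M then ‖(y n : ∀ _ : ℕ, ℝ) k‖ ^ q else 0 :=
        summable_of_ne_finset_zero (s := Finset.range M)
          (fun k hk => if_neg (by simpa using hk))
      have htot : ‖y n‖ ^ q = (∑' b, if b < M then ‖(y n : ∀ _ : ℕ, ℝ) b‖ ^ q else 0)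
          + (∑' b, if M ≤ b then ‖(y n : ∀ _ : ℕ, ℝ) b‖ ^ q else 0) := by
        rw [lp.norm_rpow_eq_tsum hq (y n), ← hs1.tsum_add hsr3]
        refine tsum_congr fun k => ?_
        by_cases h : k < M
        · simp [h, (by omega : ¬ M ≤ k), hqdef]
        · simp [h, (by omega : M ≤ k), hqdef]
      have h1 : (∑' k, if k < M then ‖(y n : ∀ _ : ℕ, ℝ) k‖ ^ q else 0)
          = ∑ k ∈ Finset.range M, ‖(y n : ∀ _ : ℕ, ℝ) k‖ ^ q := by
        rw [tsum_eq_sum (s := Finset.range M) (fun k hk => if_neg (by simpa using hk))]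
        exact Finset.sum_congr rfl fun k hk => if_pos (Finset.mem_range.mp hk)
      rw [h1] at htot
      rw [← hqdef]
      linarith [hM2]
    have huwn : ‖u - w‖ ≤ 2 ^ (1/q) := by
      refine le_rpow_inv hq (norm_nonneg _) ?_
      rw [lp.norm_rpow_eq_tsum hq]
      have hptw : ∀ k, ‖((u - w : lp (fun _ : ℕ => ℝ) p) : ∀ _ : ℕ, ℝ) k‖ ^ q
          ≤ ‖(y n : ∀ _ : ℕ, ℝ) k‖ ^ q + ‖(y m : ∀ _ : ℕ, ℝ) k‖ ^ q := by
        intro k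
        have hco : ((u - w : lp (fun _ : ℕ => ℝ) p) : ∀ _ : ℕ, ℝ) k
            = (if N ≤ k ∧ k < M then (y n : ∀ _ : ℕ, ℝ) k else 0)
              - (if M ≤ k then (y m : ∀ _ : ℕ, ℝ) k else 0) := by
          rw [lp.coeFn_sub, Pi.sub_apply, hudef, hwdef, cut_apply, cut_apply]
        rw [hco]
        by_cases h1 : N ≤ k ∧ k < M
        · have h2 : ¬ (M ≤ k) := by omega
          simp only [if_pos h1, if_neg h2, sub_zero]
          have : (0:ℝ) ≤ ‖(y m : ∀ _ : ℕ, ℝ) k‖ ^ q := Real.rpow_nonneg (norm_nonneg _) q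
          linarith
        · by_cases h2 : M ≤ k
          · simp only [if_neg h1, if_pos h2, zero_sub, norm_neg]
            have : (0:ℝ) ≤ ‖(y n : ∀ _ : ℕ, ℝ) k‖ ^ q := Real.rpow_nonneg (norm_nonneg _) q
            linarith
          · simp only [if_neg h1, if_neg h2, sub_zero, norm_zero,
              Real.zero_rpow hq.ne']
            have h3 : (0:ℝ) ≤ ‖(y n : ∀ _ : ℕ, ℝ) k‖ ^ q := Real.rpow_nonneg (norm_nonneg _) q
            have h4 : (0:ℝ) ≤ ‖(y m : ∀ _ : ℕ, ℝ) k‖ ^ q := Real.rpow_nonneg (norm_nonneg _) q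
            linarith
      calc (∑' k, ‖((u - w : lp (fun _ : ℕ => ℝ) p) : ∀ _ : ℕ, ℝ) k‖ ^ q)
          ≤ ∑' k, (‖(y n : ∀ _ : ℕ, ℝ) k‖ ^ q + ‖(y m : ∀ _ : ℕ, ℝ) k‖ ^ q) :=
            (hsum _).tsum_le_tsum hptw ((hsum (y n)).add (hsum (y m)))
        _ = ‖y n‖ ^ q + ‖y m‖ ^ q := by
            rw [(hsum (y n)).tsum_add (hsum (y m)), ← lp.norm_rpow_eq_tsum hq,
              ← lp.norm_rpow_eq_tsum hq]
        _ ≤ 2 := by linarith [hnorm1 n, hnorm1 m]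
    -- assemble
    have htri : ‖y n - y m‖ ≤ ‖u - w‖ + ‖A1‖ + ‖A2‖ + ‖B1‖ + ‖B2‖ + ‖r3‖ := by
      rw [hkey]
      calc ‖(((((u - w) + A1) - A2) - B1) - B2) + r3‖
          ≤ ‖((((u - w) + A1) - A2) - B1) - B2‖ + ‖r3‖ := norm_add_le _ _
        _ ≤ (‖(((u - w) + A1) - A2) - B1‖ + ‖B2‖) + ‖r3‖ := by
            gcongr; exact norm_sub_le _ _
        _ ≤ ((‖((u - w) + A1) - A2‖ + ‖B1‖) + ‖B2‖) + ‖r3‖ := by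
            gcongr; exact norm_sub_le _ _
        _ ≤ (((‖(u - w) + A1‖ + ‖A2‖) + ‖B1‖) + ‖B2‖) + ‖r3‖ := by
            gcongr; exact norm_sub_le _ _
        _ ≤ ((((‖u - w‖ + ‖A1‖) + ‖A2‖) + ‖B1‖) + ‖B2‖) + ‖r3‖ := by
            gcongr; exact norm_add_le _ _
        _ = ‖u - w‖ + ‖A1‖ + ‖A2‖ + ‖B1‖ + ‖B2‖ + ‖r3‖ := by ring
    calc d ≤ ‖y n - y m‖ := hd n m (fun h => hmn h.symm)
      _ ≤ ‖u - w‖ + ‖A1‖ + ‖A2‖ + ‖B1‖ + ‖B2‖ + ‖r3‖ := htri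
      _ ≤ 2 ^ (1/q) + ε ^ (1/q) + ε ^ (1/q) + ε ^ (1/q) + ε ^ (1/q) + ε ^ (1/q) := by
          gcongr
      _ = 2 ^ (1/q) + 5 * ε ^ (1/q) := by ring
  -- conclude
  refine le_of_forall_pos_le_add fun δ hδ => ?_
  have hδ5 : (0:ℝ) < δ / 5 := by linarith
  have hεpos : (0:ℝ) < (δ/5) ^ q := Real.rpow_pos_of_pos hδ5 q
  have h := main ((δ/5) ^ q) hεpos
  rw [one_div, Real.rpow_rpow_inv hδ5.le hq.ne'] at h
  rw [one_div]
  linarith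

lemma real_two_pow {q : ℝ} (hq1 : 1 ≤ q) {a b : ℝ} (ha : 0 ≤ a) (hb : 0 ≤ b) :
    (a + b) ^ q ≤ 2 ^ (q - 1) * (a ^ q + b ^ q) := by
  have h := NNReal.rpow_add_le_mul_rpow_add_rpow a.toNNReal b.toNNReal hq1
  have h2 := NNReal.coe_le_coe.mpr h
  push_cast at h2
  rwa [Real.coe_toNNReal a ha, Real.coe_toNNReal b hb] at h2

lemma coord_diff_bound (hq1 : 1 ≤ p.toReal) (i j : ℕ) (hij : i ≠ j)
    (f : lp (fun _ : ℕ => ℝ) p) :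
    ‖(f : ∀ _ : ℕ, ℝ) j - (f : ∀ _ : ℕ, ℝ) i‖ ≤ 2 ^ (1 - 1/p.toReal) * ‖f‖ := by
  set q := p.toReal with hqdef
  have hq : 0 < q := lt_of_lt_of_le zero_lt_one hq1
  set a := ‖(f : ∀ _ : ℕ, ℝ) i‖ with hadef
  set b := ‖(f : ∀ _ : ℕ, ℝ) j‖ with hbdef
  have ha : 0 ≤ a := norm_nonneg _
  have hb : 0 ≤ b := norm_nonneg _
  have h1 : ‖(f : ∀ _ : ℕ, ℝ) j - (f : ∀ _ : ℕ, ℝ) i‖ ≤ a + b := by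
    rw [add_comm]; exact norm_sub_le _ _
  have hsumf : Summable fun k => ‖(f : ∀ _ : ℕ, ℝ) k‖ ^ q :=
    (lp.hasSum_norm hq f).summable
  have h2 : a ^ q + b ^ q ≤ ‖f‖ ^ q := by
    have := hsumf.sum_le_tsum ({i, j} : Finset ℕ)
      (fun k _ => Real.rpow_nonneg (norm_nonneg _) q)
    rw [Finset.sum_pair hij] at this
    rw [lp.norm_rpow_eq_tsum hq f]
    exact this
  have h3 : (a + b) ^ q ≤ 2 ^ (q - 1) * ‖f‖ ^ q := by
    refine (real_two_pow hq1 ha hb).trans ?_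
    have h4 : (0:ℝ) ≤ 2 ^ (q - 1) := (Real.rpow_pos_of_pos two_pos _).le
    nlinarith
  have h5 : a + b ≤ (2 ^ (q - 1) * ‖f‖ ^ q) ^ (1/q) :=
    le_rpow_inv hq (by linarith) h3
  have h6 : (2 ^ (q - 1) * ‖f‖ ^ q) ^ (1/q) = 2 ^ (1 - 1/q) * ‖f‖ := by
    rw [Real.mul_rpow (Real.rpow_pos_of_pos two_pos _).le
      (Real.rpow_nonneg (norm_nonneg _) q)]
    rw [← Real.rpow_mul (by norm_num : (0:ℝ) ≤ 2), one_div,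
      Real.rpow_rpow_inv (norm_nonneg _) hq.ne']
    congr 1
    field_simp
  calc ‖(f : ∀ _ : ℕ, ℝ) j - (f : ∀ _ : ℕ, ℝ) i‖ ≤ a + b := h1
    _ ≤ (2 ^ (q - 1) * ‖f‖ ^ q) ^ (1/q) := h5
    _ = 2 ^ (1 - 1/q) * ‖f‖ := h6

/-- The difference-of-coordinates linear map, scaled. -/
def diffLM (c : ℝ) (i j : ℕ) : lp (fun _ : ℕ => ℝ) p →ₗ[ℝ] ℝ where
  toFun f := c * ((f : ∀ _ : ℕ, ℝ) j - (f : ∀ _ : ℕ, ℝ) i)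
  map_add' f g := by simp only [lp.coeFn_add, Pi.add_apply]; ring
  map_smul' t f := by
    simp only [lp.coeFn_smul, Pi.smul_apply, smul_eq_mul, RingHom.id_apply]; ring

lemma diffLM_bound (hq1 : 1 ≤ p.toReal) (i j : ℕ) (hij : i ≠ j)
    (f : lp (fun _ : ℕ => ℝ) p) :
    ‖diffLM ((2:ℝ) ^ (1/p.toReal - 1)) i j f‖ ≤ 1 * ‖f‖ := by
  have h := coord_diff_bound hq1 i j hij f
  have hc : (0:ℝ) < 2 ^ (1/p.toReal - 1) := Real.rpow_pos_of_pos two_pos _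
  calc ‖diffLM ((2:ℝ) ^ (1/p.toReal - 1)) i j f‖
      = 2 ^ (1/p.toReal - 1) * ‖(f : ∀ _ : ℕ, ℝ) j - (f : ∀ _ : ℕ, ℝ) i‖ := by
        show ‖(2:ℝ) ^ (1/p.toReal - 1) * _‖ = _
        rw [norm_mul, Real.norm_of_nonneg hc.le]
    _ ≤ 2 ^ (1/p.toReal - 1) * (2 ^ (1 - 1/p.toReal) * ‖f‖) :=
        mul_le_mul_of_nonneg_left h hc.le
    _ = 1 * ‖f‖ := by
        rw [← mul_assoc, ← Real.rpow_add two_pos]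
        norm_num

/-- The difference-of-coordinates functional, of norm at most 1. -/
def diffCLM (hq1 : 1 ≤ p.toReal) (i j : ℕ) (hij : i ≠ j) :
    lp (fun _ : ℕ => ℝ) p →L[ℝ] ℝ :=
  LinearMap.mkContinuous (diffLM ((2:ℝ) ^ (1/p.toReal - 1)) i j) 1 (diffLM_bound hq1 i j hij)

lemma diffCLM_apply (hq1 : 1 ≤ p.toReal) (i j : ℕ) (hij : i ≠ j)
    (f : lp (fun _ : ℕ => ℝ) p) :
    diffCLM hq1 i j hij f
      = (2 : ℝ) ^ (1/p.toReal - 1) * ((f : ∀ _ : ℕ, ℝ) j - (f : ∀ _ : ℕ, ℝ) i) := rfl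

lemma diffCLM_norm_le (hq1 : 1 ≤ p.toReal) (i j : ℕ) (hij : i ≠ j) :
    ‖diffCLM hq1 i j hij‖ ≤ 1 :=
  LinearMap.mkContinuous_norm_le _ zero_le_one _

lemma exists_bsa_lp (hq1 : 1 ≤ p.toReal) :
    ∃ S : Set (lp (fun _ : ℕ => ℝ) p), S.Infinite ∧
      IsBSA (lp (fun _ : ℕ => ℝ) p) S 1 1 (2 ^ (1 / p.toReal)) := by
  have hq : 0 < p.toReal := lt_of_lt_of_le zero_lt_one hq1
  set e : ℕ → lp (fun _ : ℕ => ℝ) p := fun i => lp.single p i (1:ℝ) with he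
  have happ : ∀ i k : ℕ, (e i : ∀ _ : ℕ, ℝ) k = if k = i then 1 else 0 := by
    intro i k
    by_cases h : k = i
    · subst h; simp [he, lp.single_apply_self]
    · simp [he, lp.single_apply_ne p i _ h, h]
  have hinj : Function.Injective e := by
    intro i j hij
    by_contra h
    have h1 : (e i : ∀ _ : ℕ, ℝ) i = (e j : ∀ _ : ℕ, ℝ) i := by rw [hij]
    rw [happ i i, happ j i, if_pos rfl, if_neg h] at h1
    exact one_ne_zero h1
  have hnorm : ∀ i, ‖e i‖ = 1 := by
    intro i
    have := lp.norm_single (E := fun _ : ℕ => ℝ) (ENNReal.toReal_pos_iff.mp hq).1 i (1:ℝ)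
    simpa [he] using this
  refine ⟨Set.range e, Set.infinite_range_of_injective hinj, ?_, ?_⟩
  · rintro x ⟨i, rfl⟩
    exact (hnorm i).le
  · rintro x ⟨i, rfl⟩ y ⟨j, rfl⟩ hxy
    have hij : i ≠ j := fun h => hxy (by rw [h])
    have hc : (0:ℝ) < 2 ^ (1/p.toReal - 1) := Real.rpow_pos_of_pos two_pos _
    refine ⟨diffCLM hq1 i j hij, diffCLM_norm_le hq1 i j hij, ?_, ?_⟩
    · rw [diffCLM_apply, diffCLM_apply, happ j j, happ j i, happ i j, happ i i,
        if_pos rfl, if_pos rfl, if_neg hij, if_neg (Ne.symm hij)]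
      have h2 : (2:ℝ) ^ (1/p.toReal - 1) * ((1:ℝ) - 0) - 2 ^ (1/p.toReal - 1) * ((0:ℝ) - 1)
          = 2 ^ (1/p.toReal) := by
        rw [show (1/p.toReal) = 1 + (1/p.toReal - 1) by ring, Real.rpow_add two_pos,
          Real.rpow_one]
        ring
      rw [h2]
    · rintro z ⟨k, rfl⟩
      rw [diffCLM_apply, diffCLM_apply, diffCLM_apply,
        happ i j, happ i i, happ k j, happ k i, happ j j, happ j i,
        if_pos rfl, if_pos rfl, if_neg hij, if_neg (Ne.symm hij)]
      have hA1 : (0:ℝ) ≤ (if j = k then (1:ℝ) else 0) := by split <;> norm_num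
      have hA2 : (if j = k then (1:ℝ) else 0) ≤ 1 := by split <;> norm_num
      have hB1 : (0:ℝ) ≤ (if i = k then (1:ℝ) else 0) := by split <;> norm_num
      have hB2 : (if i = k then (1:ℝ) else 0) ≤ 1 := by split <;> norm_num
      constructor <;> nlinarith

lemma Ka_lp (p : ℝ≥0∞) [Fact (1 ≤ p)] (hp : p ≠ ∞) :
    Ka (lp (fun _ : ℕ => ℝ) p) = 2 ^ (1 / p.toReal) := by
  have hp1 : 1 ≤ p.toReal := by
    rw [← ENNReal.toReal_one]
    exact (ENNReal.toReal_le_toReal (by norm_num) hp).mpr Fact.out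
  have hq : 0 < p.toReal := lt_of_lt_of_le zero_lt_one hp1
  refine Ka_eq (exists_bsa_lp hp1) ?_
  intro d S hS hB
  let E := Set.Infinite.natEmbedding S hS
  refine sep_le hq (fun n => (E n : lp (fun _ : ℕ => ℝ) p))
    (fun n => hB.1 _ (E n).2) ?_
  intro n m hnm
  exact bsa_sep hB (E n).2 (E m).2
    (fun h => hnm (E.injective (Subtype.ext h)))

/-- Auxiliary sequence of functions for `c₀`. -/
def g0 (j k : ℕ) : ℝ := if k < j then 1 else if k = j then -1 else 0

lemma g0_bounds (j k : ℕ) : -1 ≤ g0 j k ∧ g0 j k ≤ 1 := by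
  unfold g0; split_ifs <;> norm_num

lemma g0_self (j : ℕ) : g0 j j = -1 := by simp [g0]

lemma g0_lt {i j : ℕ} (h : i < j) : g0 j i = 1 := by simp [g0, h]

lemma g0_gt {i j : ℕ} (h : j < i) : g0 j i = 0 := by
  have h1 : ¬ i < j := by omega
  have h2 : i ≠ j := by omega
  simp [g0, h1, h2]

/-- The elements of `c₀` realizing the antipodal Kottman constant. -/
def xc (j : ℕ) : ZeroAtInftyContinuousMap ℕ ℝ :=
  ⟨⟨g0 j, continuous_of_discreteTopology⟩, by
    rw [cocompact_eq_atTop]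
    refine Filter.Tendsto.congr' ?_ (tendsto_const_nhds (x := (0:ℝ)))
    filter_upwards [Filter.eventually_gt_atTop j] with k hk
    have h1 : ¬ k < j := by omega
    have h2 : k ≠ j := by omega
    simp [g0, h1, h2]⟩

lemma xc_apply (j k : ℕ) : xc j k = g0 j k := rfl

lemma xc_norm_le (j : ℕ) : ‖xc j‖ ≤ 1 := by
  rw [← ZeroAtInftyContinuousMap.norm_toBCF_eq_norm,
    BoundedContinuousFunction.norm_le zero_le_one]
  intro k
  show ‖g0 j k‖ ≤ 1
  rw [Real.norm_eq_abs, abs_le]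
  exact g0_bounds j k

/-- Scaled evaluation functional on `c₀`. -/
def evLM (c : ℝ) (m : ℕ) : ZeroAtInftyContinuousMap ℕ ℝ →ₗ[ℝ] ℝ where
  toFun f := c * f m
  map_add' f g := by simp [mul_add]
  map_smul' t f := by simp; ring

def evCLM (c : ℝ) (m : ℕ) : ZeroAtInftyContinuousMap ℕ ℝ →L[ℝ] ℝ :=
  (evLM c m).mkContinuous ‖c‖ (fun f => by
    show ‖c * f m‖ ≤ ‖c‖ * ‖f‖
    rw [norm_mul]
    refine mul_le_mul_of_nonneg_left ?_ (norm_nonneg c)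
    calc ‖f m‖ = ‖f.toBCF m‖ := rfl
      _ ≤ ‖f.toBCF‖ := BoundedContinuousFunction.norm_coe_le_norm _ _
      _ = ‖f‖ := ZeroAtInftyContinuousMap.norm_toBCF_eq_norm)

lemma evCLM_apply (c : ℝ) (m : ℕ) (f : ZeroAtInftyContinuousMap ℕ ℝ) :
    evCLM c m f = c * f m := rfl

lemma evCLM_norm_le (c : ℝ) (m : ℕ) : ‖evCLM c m‖ ≤ ‖c‖ :=
  LinearMap.mkContinuous_norm_le _ (norm_nonneg c) _

lemma Ka_c0 : Ka (ZeroAtInftyContinuousMap ℕ ℝ) = 2 := by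
  refine Ka_eq ⟨Set.range xc, ?_, ?_, ?_⟩ (fun d S hS hB => bsa_le_two hS hB)
  · refine Set.infinite_range_of_injective ?_
    intro i j hij
    by_contra h
    have h1 : xc i j = xc j j := by rw [hij]
    rw [xc_apply, xc_apply, g0_self] at h1
    rcases Nat.lt_or_ge j i with hlt | hge
    · rw [g0_lt hlt] at h1; norm_num at h1
    · have h2 : i < j := by omega
      rw [g0_gt h2] at h1; norm_num at h1
  · rintro x ⟨i, rfl⟩
    exact xc_norm_le i
  · rintro x ⟨i, rfl⟩ y ⟨j, rfl⟩ hxy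
    have hij : i ≠ j := fun h => hxy (by rw [h])
    rcases Nat.lt_or_ge i j with hlt | hge
    · refine ⟨evCLM 1 i, (evCLM_norm_le 1 i).trans (by norm_num), ?_, ?_⟩
      · rw [evCLM_apply, evCLM_apply, xc_apply, xc_apply, g0_self, g0_lt hlt]
        norm_num
      · rintro z ⟨k, rfl⟩
        rw [evCLM_apply, evCLM_apply, evCLM_apply, xc_apply, xc_apply, xc_apply,
          g0_self, g0_lt hlt]
        have := g0_bounds k i
        constructor <;> nlinarith [this.1, this.2]
    · have hlt : j < i := by omega
      refine ⟨evCLM (-1) j, (evCLM_norm_le (-1) j).trans (by norm_num), ?_, ?_⟩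
      · rw [evCLM_apply, evCLM_apply, xc_apply, xc_apply, g0_self, g0_lt hlt]
        norm_num
      · rintro z ⟨k, rfl⟩
        rw [evCLM_apply, evCLM_apply, evCLM_apply, xc_apply, xc_apply, xc_apply,
          g0_self, g0_lt hlt]
        have := g0_bounds k j
        constructor <;> nlinarith [this.1, this.2]

end Stmt16Aux

/-- K_a(ℓᵖ) = 2^{1/p} for 1 < p < ∞, and K_a(c₀) = K_a(ℓ¹) = 2. -/
theorem stmt16 :
    (∀ (p : ℝ≥0∞) [Fact (1 ≤ p)], 1 < p → p ≠ ∞ →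
      Ka (lp (fun _ : ℕ => ℝ) p) = 2 ^ (1 / p.toReal)) ∧
    Ka (ZeroAtInftyContinuousMap ℕ ℝ) = 2 ∧
    Ka (lp (fun _ : ℕ => ℝ) 1) = 2 := by
  refine ⟨fun p _ _ hpt => Stmt16Aux.Ka_lp p hpt, Stmt16Aux.Ka_c0, ?_⟩
  haveI : Fact ((1:ℝ≥0∞) ≤ 1) := ⟨le_rfl⟩
  have h := Stmt16Aux.Ka_lp 1 (by norm_num)
  rw [h, ENNReal.toReal_one]
  norm_num
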